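/- arXiv:2604.16041 — 2 statements merged into one kernel-verified Lean document; each statement's English description precedes it below -/
import Mathlib

section
/- Let A be a Hermitian n×n matrix, 𝓑 a *-closed unital subspace of M_n(ℂ), and suppose there exists a nonzero Hermitian matrix X with tr(XB) = 0 for all B ∈ 𝓑 and A X = ‖A‖ |X|. Then A is 𝓑-minimal, i.e., ‖A‖ ≤ ‖A + B‖ for all Hermitian B ∈ 𝓑. -/
open Matrix
open scoped Matrix ComplexOrder

noncomputable def opNorm {n : ℕ} (A : Matrix (Fin n) (Fin n) ℂ) : ℝ :=
  ‖Matrix.toEuclideanCLM (𝕜 := ℂ) (n := Fin n) A‖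

set_option synthInstance.maxHeartbeats 1000000
set_option maxHeartbeats 1000000

lemma quad_bound {n : ℕ} (M : Matrix (Fin n) (Fin n) ℂ) (x : Fin n → ℂ)
    (hx : star x ⬝ᵥ x = 1) : ‖star x ⬝ᵥ (M *ᵥ x)‖ ≤ opNorm M := by
  set T := Matrix.toEuclideanCLM (𝕜 := ℂ) (n := Fin n) M
  set y : EuclideanSpace ℂ (Fin n) := (WithLp.equiv 2 _).symm x with hy
  have hyy : (inner ℂ y y : ℂ) = 1 := by
    rw [hy, EuclideanSpace.inner_eq_star_dotProduct]; simpa [dotProduct_comm] using hx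
  have hyn : ‖y‖ = 1 := by
    have h2 := inner_self_eq_norm_sq_to_K (𝕜 := ℂ) y
    rw [hyy] at h2
    have : (‖y‖ : ℂ) ^ 2 = 1 := h2.symm
    have h3 : ‖y‖ ^ 2 = 1 := by exact_mod_cast this
    nlinarith [norm_nonneg y]
  have h1 : (inner ℂ y (T y) : ℂ) = star x ⬝ᵥ (M *ᵥ x) := by
    rw [EuclideanSpace.inner_eq_star_dotProduct]
    simp [hy, T, Matrix.toLin'_apply]
    exact dotProduct_comm _ _
  calc ‖star x ⬝ᵥ (M *ᵥ x)‖ = ‖(inner ℂ y (T y) : ℂ)‖ := by rw [h1]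
    _ ≤ ‖y‖ * ‖T y‖ := norm_inner_le_norm (𝕜 := ℂ) y (T y)
    _ ≤ ‖y‖ * (‖T‖ * ‖y‖) := by
        exact mul_le_mul_of_nonneg_left (T.le_opNorm y) (norm_nonneg y)
    _ = opNorm M := by rw [hyn]; simp [opNorm, T]


/-- If a Hermitian `A` admits a nonzero Hermitian certificate `X`,
trace-orthogonal to the `*`-closed unital subspace `𝓑`, with
`A X = ‖A‖ |X|`, then `A` is `𝓑`-minimal. -/
theorem minimal_of_certificate {n : ℕ}
    (A : Matrix (Fin n) (Fin n) ℂ) (hA : A.IsHermitian)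
    (𝓑 : Submodule ℂ (Matrix (Fin n) (Fin n) ℂ))
    (hI : (1 : Matrix (Fin n) (Fin n) ℂ) ∈ 𝓑)
    (hstar : ∀ B ∈ 𝓑, Bᴴ ∈ 𝓑)
    (X : Matrix (Fin n) (Fin n) ℂ) (hXher : X.IsHermitian) (hXne : X ≠ 0)
    (horth : ∀ B ∈ 𝓑, Matrix.trace (X * B) = 0)
    (hcert : A * X = ((opNorm A : ℝ) : ℂ) •
      (((Matrix.posSemidef_conjTranspose_mul_self X).1.eigenvectorUnitary : Matrix (Fin n) (Fin n) ℂ) *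
        diagonal ((fun r : ℝ => (r : ℂ)) ∘ Real.sqrt ∘ (Matrix.posSemidef_conjTranspose_mul_self X).1.eigenvalues) *
        (star (Matrix.posSemidef_conjTranspose_mul_self X).1.eigenvectorUnitary : Matrix (Fin n) (Fin n) ℂ))) :
    ∀ B ∈ 𝓑, B.IsHermitian → opNorm A ≤ opNorm (A + B) := by
  classical
  intro B hB _
  set c : ℝ := opNorm A with hc
  set U : Matrix (Fin n) (Fin n) ℂ := (hXher.eigenvectorUnitary : Matrix (Fin n) (Fin n) ℂ)
    with hU
  set d : Fin n → ℝ := hXher.eigenvalues with hd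
  have hUU : star U * U = 1 := Matrix.mem_unitaryGroup_iff'.mp hXher.eigenvectorUnitary.2
  set D : Matrix (Fin n) (Fin n) ℂ := diagonal (fun i => (d i : ℂ)) with hD
  have hspec : X = U * D * star U := hXher.spectral_theorem
  set Dabs : Matrix (Fin n) (Fin n) ℂ := diagonal (fun i => ((|d i| : ℝ) : ℂ)) with hDabs
  set S : Matrix (Fin n) (Fin n) ℂ := U * Dabs * star U with hSdef
  have key : ∀ E F : Matrix (Fin n) (Fin n) ℂ,
      (U * E * star U) * (U * F * star U) = U * (E * F) * star U := by
    intro E F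
    calc (U * E * star U) * (U * F * star U)
        = U * (E * ((star U * U) * (F * star U))) := by simp only [mul_assoc]
      _ = U * (E * F) * star U := by rw [hUU, one_mul]; simp only [mul_assoc]
  have hDabs_psd : PosSemidef Dabs := by
    refine posSemidef_diagonal_iff.mpr fun i => ?_
    exact_mod_cast Complex.zero_le_real.mpr (abs_nonneg _)
  have hSpsd : PosSemidef S := by
    rw [hSdef, Matrix.star_eq_conjTranspose]
    exact hDabs_psd.mul_mul_conjTranspose_same U
  have hDD : Dabs * Dabs = D * D := by
    rw [hDabs, hD, diagonal_mul_diagonal, diagonal_mul_diagonal]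
    have habs : ∀ i : Fin n, ((|d i| : ℝ) : ℂ) * ((|d i| : ℝ) : ℂ)
        = ((d i : ℝ) : ℂ) * ((d i : ℝ) : ℂ) := fun i => by
      rw [← Complex.ofReal_mul, ← Complex.ofReal_mul, abs_mul_abs_self]
    ext i j
    simp [Matrix.diagonal_apply, habs]
  have hsq : S ^ 2 = Xᴴ * X := by
    rw [hXher.eq, pow_two, hSdef, hspec, key, key, hDD]
  have hS : S = ((Matrix.posSemidef_conjTranspose_mul_self X).1.eigenvectorUnitary : Matrix (Fin n) (Fin n) ℂ) *
        diagonal ((fun r : ℝ => (r : ℂ)) ∘ Real.sqrt ∘ (Matrix.posSemidef_conjTranspose_mul_self X).1.eigenvalues) *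
        (star (Matrix.posSemidef_conjTranspose_mul_self X).1.eigenvectorUnitary : Matrix (Fin n) (Fin n) ℂ) := by
    have hXX : Xᴴ * X = cfc (fun x : ℝ => x * x) X := by
      rw [cfc_mul (fun x : ℝ => x) (fun x : ℝ => x) X, cfc_id' ℝ X, hXher.eq]
    have e1 := (Matrix.posSemidef_conjTranspose_mul_self X).1.cfc_eq Real.sqrt
    rw [IsHermitian.cfc, Unitary.conjStarAlgAut_apply] at e1
    have e2 := hXher.cfc_eq (fun x : ℝ => |x|)
    rw [IsHermitian.cfc, Unitary.conjStarAlgAut_apply] at e2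
    calc S = cfc (fun x : ℝ => |x|) X := by rw [e2]; rfl
      _ = cfc Real.sqrt (Xᴴ * X) := by
          rw [hXX, ← cfc_comp Real.sqrt (fun x : ℝ => x * x) X]
          congr 1
          funext x
          simp [Real.sqrt_mul_self_eq_abs]
      _ = _ := by rw [e1]; rfl
  set t : ℝ := ∑ i, |d i| with ht
  have htS : trace S = (t : ℂ) := by
    rw [hSdef, Matrix.trace_mul_cycle, hUU, one_mul, hDabs, trace_diagonal, ht]
    push_cast
    rfl
  have ht_nonneg : 0 ≤ t := Finset.sum_nonneg fun i _ => abs_nonneg _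
  have ht_pos : 0 < t := by
    rcases ht_nonneg.lt_or_eq with h | h
    · exact h
    · exfalso
      apply hXne
      have hz : ∀ i ∈ Finset.univ, |d i| = 0 :=
        (Finset.sum_eq_zero_iff_of_nonneg (fun i _ => abs_nonneg (d i))).mp h.symm
      have hd0 : D = 0 := by
        have hdz : ∀ i, d i = 0 := fun i => abs_eq_zero.mp (hz i (Finset.mem_univ i))
        rw [hD]
        ext i j
        simp [diagonal_apply, hdz]
      rw [hspec, hd0, mul_zero, zero_mul]
  -- trace duality
  have hdual : ∀ M : Matrix (Fin n) (Fin n) ℂ, ‖trace (X * M)‖ ≤ opNorm M * t := by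
    intro M
    have htr : trace (X * M) = ∑ i, (star U * M * U) i i * (d i : ℂ) := by
      rw [hspec, mul_assoc (U * D) (star U) M, Matrix.trace_mul_comm, ← Matrix.mul_assoc,
        hD]
      simp [Matrix.trace, Matrix.diag, Matrix.mul_diagonal]
    have hNi : ∀ i : Fin n, ‖(star U * M * U) i i‖ ≤ opNorm M := by
      intro i
      set u : Fin n → ℂ := fun j => U j i with hu
      have hunit : star u ⬝ᵥ u = 1 := by
        have h1 := congrFun (congrFun hUU i) i
        simpa [Matrix.mul_apply, Matrix.one_apply, Matrix.star_apply, dotProduct, hu] using h1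
      have hNe : (star U * M * U) i i = star u ⬝ᵥ (M *ᵥ u) := by
        simp only [Matrix.mul_apply, dotProduct, Matrix.mulVec, Matrix.star_apply,
          Pi.star_apply, hu, Finset.mul_sum, Finset.sum_mul]
        rw [Finset.sum_comm]
        congr 1; funext j; congr 1; funext k
        ring
      rw [hNe]
      exact quad_bound M u hunit
    calc ‖trace (X * M)‖ = ‖∑ i, (star U * M * U) i i * (d i : ℂ)‖ := by rw [htr]
      _ ≤ ∑ i, ‖(star U * M * U) i i * (d i : ℂ)‖ := norm_sum_le _ _
      _ ≤ ∑ i, opNorm M * |d i| := by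
          refine Finset.sum_le_sum fun i _ => ?_
          rw [norm_mul, Complex.norm_real, Real.norm_eq_abs]
          exact mul_le_mul_of_nonneg_right (hNi i) (abs_nonneg _)
      _ = opNorm M * t := by rw [← Finset.mul_sum, ht]
  have hXA : trace (X * A) = ((c * t : ℝ) : ℂ) := by
    rw [Matrix.trace_mul_comm, hcert, ← hS, trace_smul, htS]
    push_cast
    simp [smul_eq_mul]
  have h0 : trace (X * (A + B)) = ((c * t : ℝ) : ℂ) := by
    rw [mul_add, trace_add, horth B hB, add_zero, hXA]
  have h1 : c * t ≤ opNorm (A + B) * t := by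
    have h2 := hdual (A + B)
    rw [h0] at h2
    have h3 : ‖((c * t : ℝ) : ℂ)‖ = c * t := by
      rw [Complex.norm_real, Real.norm_eq_abs, abs_of_nonneg]
      exact mul_nonneg (norm_nonneg _) ht_nonneg
    rwa [h3] at h2
  exact le_of_mul_le_mul_right h1 ht_pos
end

section
/- Let A(x) = A₀ + Σ_{k=1}^t x_k B_k with A₀, B_k Hermitian, and let S_max be the eigenspace of λ_max(A(x₀)) at a point x₀ ∈ ℝᵗ. Then the subdifferential of the convex function x ↦ λ_max(A(x)) at x₀ equals m_{S_max} = conv{(⟨B_1 v, v⟩, …, ⟨B_t v, v⟩) : v ∈ S_max, ‖v‖ = 1} ⊆ ℝᵗ. -/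
open Matrix
open scoped Matrix ComplexOrder

/-- The largest eigenvalue of a matrix, as the supremum of its real
eigenvalues. -/
noncomputable def lambdaMax {n : ℕ} (A : Matrix (Fin n) (Fin n) ℂ) : ℝ :=
  sSup {r : ℝ | Module.End.HasEigenvalue (Matrix.toEuclideanLin A) (r : ℂ)}

/-- The subdifferential of `f : ℝᵗ → ℝ` at `x₀`. -/
def subdiff {t : ℕ} (f : (Fin t → ℝ) → ℝ) (x₀ : Fin t → ℝ) : Set (Fin t → ℝ) :=
  {v | ∀ y, f y - f x₀ ≥ ∑ k, v k * (y k - x₀ k)}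

private lemma sum_dite_fin' {M : Type*} [AddCommMonoid M] {N k : ℕ} (hk : k ≤ N)
    {ι : Type*} [Fintype ι] (e : Fin k ≃ ι) (f : ι → M) :
    (∑ i : Fin N, if h : (i : ℕ) < k then f (e ⟨i, h⟩) else 0) = ∑ j, f j := by
  classical
  set F : ℕ → M := fun m => if h : m < k then f (e ⟨m, h⟩) else 0 with hF
  have h1 : (∑ i : Fin N, if h : (i : ℕ) < k then f (e ⟨i, h⟩) else 0)
      = ∑ m ∈ Finset.range N, F m := by
    rw [Finset.sum_range fun m => F m]
  have h2 : (∑ m ∈ Finset.range k, F m) = ∑ m ∈ Finset.range N, F m := by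
    apply Finset.sum_subset (Finset.range_subset_range.2 hk)
    intro x _ hx
    rw [Finset.mem_range] at hx
    exact dif_neg hx
  have h3 : (∑ m ∈ Finset.range k, F m) = ∑ i : Fin k, f (e i) := by
    rw [Finset.sum_range fun m => F m]
    refine Finset.sum_congr rfl fun i _ => ?_
    simp only [hF]
    rw [dif_pos i.2]
  rw [h1, ← h2, h3]
  exact Equiv.sum_comp e f

private lemma isCompact_convexHull_of_isCompact {E : Type*} [NormedAddCommGroup E]
    [NormedSpace ℝ E] [FiniteDimensional ℝ E] {s : Set E} (hs : IsCompact s) :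
    IsCompact (convexHull ℝ s) := by
  rcases s.eq_empty_or_nonempty with rfl | ⟨z₀, hz₀⟩
  · simp only [convexHull_empty]; exact isCompact_empty
  set N := Module.finrank ℝ E + 1 with hN
  set D : Set ((Fin N → ℝ) × (Fin N → E)) :=
    (stdSimplex ℝ (Fin N)) ×ˢ (Set.univ.pi fun _ => s) with hD
  have hDc : IsCompact D := (isCompact_stdSimplex ℝ (Fin N)).prod (isCompact_univ_pi fun _ => hs)
  set Φ : (Fin N → ℝ) × (Fin N → E) → E := fun p => ∑ i, p.1 i • p.2 i with hΦ
  have hΦc : Continuous Φ := by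
    apply continuous_finset_sum
    intro i _
    exact ((continuous_apply i).comp continuous_fst).smul ((continuous_apply i).comp continuous_snd)
  have himg : convexHull ℝ s = Φ '' D := by
    apply Set.Subset.antisymm
    · intro x hx
      obtain ⟨ι, hι, z, w, hzs, hai, hw0, hw1, hwz⟩ :=
        eq_pos_convex_span_of_mem_convexHull hx
      have hne : Nonempty ι := by
        by_contra h
        rw [not_nonempty_iff] at h
        rw [Finset.univ_eq_empty, Finset.sum_empty] at hw1
        exact one_ne_zero hw1.symm
      have hcard : Fintype.card ι ≤ N := by
        have h1 := hai.finrank_vectorSpan_add_one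
        have h2 : Module.finrank ℝ (vectorSpan ℝ (Set.range z)) ≤ Module.finrank ℝ E :=
          Submodule.finrank_le _
        omega
      set k := Fintype.card ι with hk
      obtain ⟨e⟩ : Nonempty (Fin k ≃ ι) := ⟨(Fintype.equivFin ι).symm⟩
      set w' : Fin N → ℝ := fun i => if h : (i : ℕ) < k then w (e ⟨i, h⟩) else 0 with hw'
      set z' : Fin N → E := fun i => if h : (i : ℕ) < k then z (e ⟨i, h⟩) else z₀ with hz'
      have keyE : (∑ i : Fin N, w' i • z' i) = ∑ j : ι, w j • z j := by
        have heq : ∀ i : Fin N, w' i • z' i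
            = if h : (i : ℕ) < k then (fun j => w j • z j) (e ⟨i, h⟩) else (0:E) := by
          intro i
          simp only [hw', hz']
          split <;> simp
        rw [show (∑ i : Fin N, w' i • z' i)
            = ∑ i : Fin N, if h : (i : ℕ) < k then (fun j => w j • z j) (e ⟨i, h⟩) else (0:E)
          from Finset.sum_congr rfl fun i _ => heq i]
        exact sum_dite_fin' (M := E) hcard e (fun j => w j • z j)
      refine ⟨(w', z'), ⟨⟨fun i => ?_, ?_⟩, fun i _ => ?_⟩, ?_⟩
      · dsimp only [w']
        split
        · exact (hw0 _).le
        · exact le_refl 0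
      · rw [show (∑ i : Fin N, w' i) = ∑ j : ι, w j from sum_dite_fin' hcard e w]
        exact hw1
      · dsimp only [z']
        split
        · exact hzs (Set.mem_range_self _)
        · exact hz₀
      · rw [hΦ]
        dsimp only
        rw [keyE]
        exact hwz
    · rintro _ ⟨⟨w, z⟩, ⟨⟨hw0, hw1⟩, hzmem⟩, rfl⟩
      have := Finset.centerMass_mem_convexHull (Finset.univ : Finset (Fin N))
        (fun i _ => hw0 i) (by rw [hw1]; norm_num)
        (fun i _ => hzmem i (Set.mem_univ i))
      rwa [Finset.centerMass_eq_of_sum_1 _ _ hw1] at this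
  rw [himg]
  exact hDc.image hΦc

private lemma lambdaMax_key {n : ℕ} (hn : 0 < n) {M : Matrix (Fin n) (Fin n) ℂ}
    (hM : M.IsHermitian) :
    (∀ v : EuclideanSpace ℂ (Fin n),
        (inner ℂ (Matrix.toEuclideanLin M v) v : ℂ).re ≤ lambdaMax M * ‖v‖ ^ 2) ∧
    (∃ v : EuclideanSpace ℂ (Fin n), ‖v‖ = 1 ∧
        Matrix.toEuclideanLin M v = (lambdaMax M : ℂ) • v) ∧
    (∀ v : EuclideanSpace ℂ (Fin n), ‖v‖ = 1 →
        (inner ℂ (Matrix.toEuclideanLin M v) v : ℂ).re = lambdaMax M →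
        Matrix.toEuclideanLin M v = (lambdaMax M : ℂ) • v) := by
  haveI : Nonempty (Fin n) := ⟨⟨0, hn⟩⟩
  have hT : (Matrix.toEuclideanLin M).IsSymmetric := isHermitian_iff_isSymmetric.mp hM
  set T := Matrix.toEuclideanLin M with hTdef
  have hfr : Module.finrank ℂ (EuclideanSpace ℂ (Fin n)) = n := finrank_euclideanSpace_fin
  set b := hT.eigenvectorBasis hfr with hb
  set μ := hT.eigenvalues hfr with hμ
  obtain ⟨i₀, hi₀⟩ := Finite.exists_max μ
  have hray : ∀ v : EuclideanSpace ℂ (Fin n),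
      (inner ℂ (T v) v : ℂ).re = ∑ i, μ i * Complex.normSq (b.repr v i) := by
    intro v
    have h1 : (inner ℂ (T v) v : ℂ) = ∑ i, ((μ i : ℂ) * (Complex.normSq (b.repr v i) : ℂ)) := by
      rw [← OrthonormalBasis.sum_inner_mul_inner b (T v) v]
      refine Finset.sum_congr rfl fun i _ => ?_
      have hrepr := hT.eigenvectorBasis_apply_self_apply hfr v i
      rw [← hb, ← hμ] at hrepr
      calc (inner ℂ (T v) (b i) : ℂ) * (inner ℂ (b i) v : ℂ)
          = starRingEnd ℂ (b.repr (T v) i) * b.repr v i := by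
            rw [OrthonormalBasis.repr_apply_apply, OrthonormalBasis.repr_apply_apply,
              inner_conj_symm]
        _ = starRingEnd ℂ ((μ i : ℂ) * b.repr v i) * b.repr v i :=
            congrArg (fun z => starRingEnd ℂ z * b.repr v i) hrepr
        _ = (μ i : ℂ) * (starRingEnd ℂ (b.repr v i) * b.repr v i) := by
            rw [_root_.map_mul, Complex.conj_ofReal]; ring
        _ = (μ i : ℂ) * (Complex.normSq (b.repr v i) : ℂ) := by
            rw [← Complex.normSq_eq_conj_mul_self]
    rw [h1]
    rw [Complex.re_sum]
    refine Finset.sum_congr rfl fun i _ => ?_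
    rw [← Complex.ofReal_mul]
    exact Complex.ofReal_re _
  have hnormsq : ∀ v : EuclideanSpace ℂ (Fin n),
      ‖v‖ ^ 2 = ∑ i, Complex.normSq (b.repr v i) := by
    intro v
    rw [← b.repr.norm_map v]
    rw [EuclideanSpace.norm_eq]
    rw [Real.sq_sqrt (Finset.sum_nonneg fun i _ => sq_nonneg _)]
    refine Finset.sum_congr rfl fun i _ => ?_
    simp [Complex.normSq_eq_norm_sq]
  have hlam : lambdaMax M = μ i₀ := by
    have hmem : μ i₀ ∈ {r : ℝ | Module.End.HasEigenvalue T ((r : ℂ))} :=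
      hT.hasEigenvalue_eigenvalues hfr i₀
    have hub : ∀ r ∈ {r : ℝ | Module.End.HasEigenvalue T ((r : ℂ))}, r ≤ μ i₀ := by
      intro r hr
      obtain ⟨v, hv⟩ := hr.exists_hasEigenvector
      have hv0 : v ≠ 0 := hv.2
      have hvT : T v = (r : ℂ) • v := Module.End.mem_eigenspace_iff.mp hv.1
      have : ∃ i, b.repr v i ≠ 0 := by
        by_contra h
        push_neg at h
        apply hv0
        have : b.repr v = 0 := by ext i; exact h i
        simpa using b.repr.injective (by simpa using this)
      obtain ⟨i, hi⟩ := this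
      have h1 : (μ i : ℂ) * b.repr v i = (r : ℂ) * b.repr v i := by
        have h2 := hT.eigenvectorBasis_apply_self_apply hfr v i
        rw [← hb, ← hμ, hvT] at h2
        have h2' : b.repr ((r : ℂ) • v) i = (r : ℂ) * b.repr v i := by
          rw [_root_.map_smul]; rfl
        exact h2.symm.trans h2'
      have h3 : (μ i : ℂ) = (r : ℂ) := mul_right_cancel₀ hi h1
      have h4 : μ i = r := by exact_mod_cast h3
      rw [← h4]
      exact hi₀ i
    exact le_antisymm (csSup_le ⟨μ i₀, hmem⟩ hub) (le_csSup ⟨μ i₀, hub⟩ hmem)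
  refine ⟨?_, ?_, ?_⟩
  · intro v
    rw [hray, hlam, hnormsq, Finset.mul_sum]
    exact Finset.sum_le_sum fun i _ =>
      mul_le_mul_of_nonneg_right (hi₀ i) (Complex.normSq_nonneg _)
  · refine ⟨b i₀, b.orthonormal.1 i₀, ?_⟩
    rw [hlam]
    exact hT.apply_eigenvectorBasis hfr i₀
  · intro v hv1 hvr
    have hzero : ∑ i, (μ i₀ - μ i) * Complex.normSq (b.repr v i) = 0 := by
      rw [Finset.sum_congr rfl fun i _ => sub_mul (μ i₀) (μ i) (Complex.normSq (b.repr v i))]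
      rw [Finset.sum_sub_distrib, ← Finset.mul_sum, ← hnormsq, hv1, ← hray, hvr, hlam]
      norm_num
    have hterm := (Finset.sum_eq_zero_iff_of_nonneg fun i _ =>
      mul_nonneg (sub_nonneg.mpr (hi₀ i)) (Complex.normSq_nonneg _)).mp hzero
    apply b.repr.injective
    ext i
    have h3 := hT.eigenvectorBasis_apply_self_apply hfr v i
    have h4 : b.repr ((lambdaMax M : ℂ) • v) i = (lambdaMax M : ℂ) * b.repr v i := by
      rw [_root_.map_smul]
      rfl
    rw [← hb, ← hμ] at h3
    rw [h3, h4]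
    by_cases hc : b.repr v i = 0
    · rw [hc, mul_zero, mul_zero]
    · have h5 := hterm i (Finset.mem_univ i)
      have h6 : μ i₀ - μ i = 0 := by
        rcases mul_eq_zero.mp h5 with h | h
        · exact h
        · exact absurd h (by simpa [Complex.normSq_eq_zero] using hc)
      have h7 : μ i = lambdaMax M := by rw [hlam]; linarith [sub_eq_zero.mp h6]
      rw [h7]
      rfl

/-- The subdifferential of `x ↦ λ_max(A₀ + ∑ x_k B_k)` at `x₀` equals the
moment of the eigenspace of `λ_max(A(x₀))`. -/
theorem subdiff_lambdaMax_eq_moment {n t : ℕ} (hn : 0 < n)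
    (A₀ : Matrix (Fin n) (Fin n) ℂ) (hA₀ : A₀.IsHermitian)
    (B : Fin t → Matrix (Fin n) (Fin n) ℂ) (hB : ∀ k, (B k).IsHermitian)
    (x₀ : Fin t → ℝ)
    (A : (Fin t → ℝ) → Matrix (Fin n) (Fin n) ℂ)
    (hA : A = fun x => A₀ + ∑ k, ((x k : ℂ)) • B k)
    (Smax : Submodule ℂ (EuclideanSpace ℂ (Fin n)))
    (hSmax : Smax = Module.End.eigenspace
      (Matrix.toEuclideanLin (A x₀)) ((lambdaMax (A x₀) : ℂ))) :
    subdiff (fun x => lambdaMax (A x)) x₀ =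
      convexHull ℝ {w : Fin t → ℝ | ∃ v ∈ Smax, ‖v‖ = 1 ∧
        ∀ k, w k = (inner ℂ (Matrix.toEuclideanLin (B k) v) v : ℂ).re} := by
  classical
  have hAx : ∀ x, (A x).IsHermitian := by
    intro x
    rw [hA]
    refine hA₀.add ?_
    show Matrix.conjTranspose _ = _
    rw [Matrix.conjTranspose_sum]
    refine Finset.sum_congr rfl fun k _ => ?_
    rw [Matrix.conjTranspose_smul, (hB k).eq]
    congr 1
    exact Complex.conj_ofReal _
  set f : (Fin t → ℝ) → ℝ := fun x => lambdaMax (A x) with hf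
  have hkey := fun x => lambdaMax_key hn (hAx x)
  set mo : Fin t → EuclideanSpace ℂ (Fin n) → ℝ :=
    fun k v => (inner ℂ (Matrix.toEuclideanLin (B k) v) v : ℂ).re with hmo
  set R : (Fin t → ℝ) → EuclideanSpace ℂ (Fin n) → ℝ :=
    fun x v => (inner ℂ (Matrix.toEuclideanLin (A x) v) v : ℂ).re with hR
  -- affine structure of the Rayleigh quotient
  have hRaff : ∀ x y (v : EuclideanSpace ℂ (Fin n)),
      R x v - R y v = ∑ k, (x k - y k) * mo k v := by
    intro x y v
    have haff : ∀ z : Fin t → ℝ, R z v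
        = (inner ℂ (Matrix.toEuclideanLin A₀ v) v : ℂ).re + ∑ k, z k * mo k v := by
      intro z
      have hTx : Matrix.toEuclideanLin (A z) v
          = Matrix.toEuclideanLin A₀ v + ∑ k, (z k : ℂ) • Matrix.toEuclideanLin (B k) v := by
        rw [hA]
        simp only [map_add, map_sum, _root_.map_smul, LinearMap.add_apply, LinearMap.sum_apply,
          LinearMap.smul_apply]
      rw [hR]
      simp only
      rw [hTx, inner_add_left, sum_inner, Complex.add_re, Complex.re_sum]
      congr 1
      refine Finset.sum_congr rfl fun k _ => ?_
      rw [inner_smul_left, Complex.conj_ofReal]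
      have hre : ∀ (a : ℝ) (w : ℂ), ((a : ℂ) * w).re = a * w.re := fun a w => by
        simp [Complex.mul_re]
      rw [hre]
    rw [haff x, haff y]
    rw [Finset.sum_congr rfl fun k _ => sub_mul (x k) (y k) (mo k v), Finset.sum_sub_distrib]
    ring
  have hunit : ∀ (r : ℝ) (v : EuclideanSpace ℂ (Fin n)), ‖v‖ = 1 →
      (inner ℂ (((r : ℂ)) • v) v : ℂ).re = r := by
    intro r v hv
    rw [inner_smul_left, Complex.conj_ofReal, inner_self_eq_norm_sq_to_K, hv]
    norm_num
  have hfR : ∀ x (v : EuclideanSpace ℂ (Fin n)), ‖v‖ = 1 →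
      Matrix.toEuclideanLin (A x) v = ((f x : ℝ) : ℂ) • v → R x v = f x := by
    intro x v hv heq
    rw [hR]
    simp only
    rw [heq]
    exact hunit _ _ hv
  have hRle : ∀ x (v : EuclideanSpace ℂ (Fin n)), ‖v‖ = 1 → R x v ≤ f x := by
    intro x v hv
    have h := (hkey x).1 v
    rw [hv, one_pow, mul_one] at h
    exact h
  apply Set.Subset.antisymm
  · -- subdiff ⊆ convexHull
    intro g hg
    by_contra hgK
    -- the moment set is compact
    set Sset : Set (EuclideanSpace ℂ (Fin n)) := (Smax : Set _) ∩ Metric.sphere 0 1 with hSset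
    have hScl : IsClosed Sset :=
      (Submodule.closed_of_finiteDimensional Smax).inter Metric.isClosed_sphere
    have hScpt : IsCompact Sset :=
      (isCompact_sphere (0 : EuclideanSpace ℂ (Fin n)) 1).of_isClosed_subset hScl
        Set.inter_subset_right
    have hmocont : ∀ k, Continuous (mo k) := by
      intro k
      exact Complex.continuous_re.comp
        (Continuous.inner (LinearMap.continuous_of_finiteDimensional _) continuous_id)
    have hMS : {w : Fin t → ℝ | ∃ v ∈ Smax, ‖v‖ = 1 ∧
        ∀ k, w k = (inner ℂ (Matrix.toEuclideanLin (B k) v) v : ℂ).re}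
        = (fun v => fun k => mo k v) '' Sset := by
      ext w
      constructor
      · rintro ⟨v, hvS, hv1, hwk⟩
        exact ⟨v, ⟨hvS, by simpa [Metric.mem_sphere] using hv1⟩,
          (funext fun k => (hwk k).symm)⟩
      · rintro ⟨v, ⟨hvS, hvsph⟩, rfl⟩
        exact ⟨v, hvS, by simpa [Metric.mem_sphere] using hvsph, fun k => rfl⟩
    have hMScpt : IsCompact ((fun v => fun k => mo k v) '' Sset) :=
      hScpt.image (continuous_pi fun k => hmocont k)
    rw [hMS] at hgK
    have hKcpt := isCompact_convexHull_of_isCompact hMScpt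
    obtain ⟨φs, u, hu1, hu2⟩ :=
      geometric_hahn_banach_closed_point (convex_convexHull ℝ _) hKcpt.isClosed hgK
    set d : Fin t → ℝ := fun k => φs (Pi.single k 1) with hd
    have hφs : ∀ w : Fin t → ℝ, φs w = ∑ k, w k * d k := by
      intro w
      have hw : w = ∑ k, w k • (Pi.single k (1:ℝ) : Fin t → ℝ) := by
        calc w = ∑ k, (Pi.single k (w k) : Fin t → ℝ) := (Finset.univ_sum_single w).symm
          _ = ∑ k, w k • (Pi.single k (1:ℝ) : Fin t → ℝ) := by
              refine Finset.sum_congr rfl fun k _ => ?_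
              rw [← Pi.single_smul' k (w k) (1:ℝ), smul_eq_mul, mul_one]
      conv_lhs => rw [hw]
      rw [map_sum]
      refine Finset.sum_congr rfl fun k _ => ?_
      rw [ContinuousLinearMap.map_smul, smul_eq_mul]
    -- the Danskin sequence
    set s : ℕ → ℝ := fun m => 1 / (m + 1 : ℝ) with hs
    have hspos : ∀ m, 0 < s m := by intro m; positivity
    set y : ℕ → (Fin t → ℝ) := fun m => x₀ + s m • d with hy
    have hyk : ∀ m k, y m k - x₀ k = s m * d k := by
      intro m k
      simp [hy, Pi.add_apply, Pi.smul_apply, smul_eq_mul]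
    have hex : ∀ m, ∃ v : EuclideanSpace ℂ (Fin n), ‖v‖ = 1 ∧
        Matrix.toEuclideanLin (A (y m)) v = ((f (y m) : ℝ) : ℂ) • v := fun m => (hkey (y m)).2.1
    choose v hv1 hv2 using hex
    have hstep : ∀ m, (∑ k, g k * d k) ≤ (∑ k, d k * mo k (v m)) ∧
        f x₀ + s m * ((∑ k, g k * d k) - ∑ k, d k * mo k (v m)) ≤ R x₀ (v m) := by
      intro m
      have hsub : f (y m) - f x₀ ≥ ∑ k, g k * (y m k - x₀ k) := hg (y m)
      have h1 : ∑ k, g k * (y m k - x₀ k) = s m * ∑ k, g k * d k := by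
        rw [Finset.mul_sum]
        refine Finset.sum_congr rfl fun k _ => ?_
        rw [hyk]
        ring
      have h2 : R (y m) (v m) = f (y m) := hfR _ _ (hv1 m) (hv2 m)
      have h3 : R (y m) (v m) - R x₀ (v m) = s m * ∑ k, d k * mo k (v m) := by
        rw [hRaff (y m) x₀ (v m), Finset.mul_sum]
        refine Finset.sum_congr rfl fun k _ => ?_
        rw [hyk]
        ring
      have h4 : R x₀ (v m) ≤ f x₀ := hRle x₀ (v m) (hv1 m)
      constructor
      · have hmul : s m * (∑ k, g k * d k) ≤ s m * (∑ k, d k * mo k (v m)) := by linarith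
        exact (mul_le_mul_iff_right₀ (hspos m)).mp hmul
      · linarith
    obtain ⟨vstar, hvstar_mem, φ, hφmono, hφtend⟩ :=
      (isCompact_sphere (0 : EuclideanSpace ℂ (Fin n)) 1).tendsto_subseq
        (fun m => mem_sphere_zero_iff_norm.mpr (hv1 m))
    have hvstar1 : ‖vstar‖ = 1 := mem_sphere_zero_iff_norm.mp hvstar_mem
    have hslim : Filter.Tendsto (fun m => s (φ m)) Filter.atTop (nhds 0) :=
      tendsto_one_div_add_atTop_nhds_zero_nat.comp hφmono.tendsto_atTop
    have hhcont : Continuous fun w : EuclideanSpace ℂ (Fin n) => ∑ k, d k * mo k w :=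
      continuous_finset_sum _ fun k _ => continuous_const.mul (hmocont k)
    have hhlim : Filter.Tendsto (fun m => ∑ k, d k * mo k (v (φ m))) Filter.atTop
        (nhds (∑ k, d k * mo k vstar)) := (hhcont.tendsto vstar).comp hφtend
    have hgd_le_star : (∑ k, g k * d k) ≤ ∑ k, d k * mo k vstar :=
      ge_of_tendsto' hhlim (fun m => (hstep (φ m)).1)
    have hRcont : Continuous fun w : EuclideanSpace ℂ (Fin n) => R x₀ w :=
      Complex.continuous_re.comp
        (Continuous.inner (LinearMap.continuous_of_finiteDimensional _) continuous_id)
    have hRlim : Filter.Tendsto (fun m => R x₀ (v (φ m))) Filter.atTop (nhds (R x₀ vstar)) :=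
      (hRcont.tendsto vstar).comp hφtend
    have hlower : Filter.Tendsto
        (fun m => f x₀ + s (φ m) * ((∑ k, g k * d k) - ∑ k, d k * mo k (v (φ m))))
        Filter.atTop (nhds (f x₀)) := by
      have h0 := tendsto_const_nhds (x := f x₀) (f := Filter.atTop (α := ℕ)) |>.add
        (hslim.mul ((tendsto_const_nhds (x := ∑ k, g k * d k)).sub hhlim))
      simpa using h0
    have hRstar : R x₀ vstar = f x₀ := by
      have h1 : Filter.Tendsto (fun m => R x₀ (v (φ m))) Filter.atTop (nhds (f x₀)) :=
        tendsto_of_tendsto_of_tendsto_of_le_of_le hlower tendsto_const_nhds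
          (fun m => (hstep (φ m)).2) (fun m => hRle x₀ (v (φ m)) (hv1 (φ m)))
      exact tendsto_nhds_unique hRlim h1
    have hvstar_eig : Matrix.toEuclideanLin (A x₀) vstar = ((f x₀ : ℝ) : ℂ) • vstar :=
      (hkey x₀).2.2 vstar hvstar1 hRstar
    have hvstarS : vstar ∈ Smax := by
      rw [hSmax]
      exact Module.End.mem_eigenspace_iff.mpr hvstar_eig
    have hwmem : (fun k => mo k vstar) ∈ (fun v => fun k => mo k v) '' Sset :=
      ⟨vstar, ⟨hvstarS, mem_sphere_zero_iff_norm.mpr hvstar1⟩, rfl⟩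
    have hwK := subset_convexHull ℝ _ hwmem
    have hc1 : φs (fun k => mo k vstar) < u := hu1 _ hwK
    have he1 : φs g = ∑ k, g k * d k := hφs g
    have he2 : φs (fun k => mo k vstar) = ∑ k, d k * mo k vstar := by
      rw [hφs]
      exact Finset.sum_congr rfl fun k _ => mul_comm _ _
    linarith
  · -- convexHull ⊆ subdiff
    apply convexHull_min
    · rintro w ⟨vv, hvS, hv1, hwk⟩
      intro y
      have hveig : Matrix.toEuclideanLin (A x₀) vv = ((f x₀ : ℝ) : ℂ) • vv := by
        rw [hSmax] at hvS
        exact Module.End.mem_eigenspace_iff.mp hvS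
      have hRx₀ : R x₀ vv = f x₀ := hfR x₀ vv hv1 hveig
      have hRy : R y vv ≤ f y := hRle y vv hv1
      have h1 : ∑ k, w k * (y k - x₀ k) = R y vv - R x₀ vv := by
        rw [hRaff y x₀ vv]
        refine Finset.sum_congr rfl fun k _ => ?_
        rw [hwk k]
        ring
      rw [ge_iff_le, h1]
      linarith
    · intro g₁ hg₁ g₂ hg₂ a bb ha hb hab
      intro y
      have h1 := hg₁ y
      have h2 := hg₂ y
      have h3 : ∑ k, (a • g₁ + bb • g₂) k * (y k - x₀ k)
          = a * (∑ k, g₁ k * (y k - x₀ k)) + bb * (∑ k, g₂ k * (y k - x₀ k)) := by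
        rw [Finset.mul_sum, Finset.mul_sum, ← Finset.sum_add_distrib]
        refine Finset.sum_congr rfl fun k _ => ?_
        simp only [Pi.add_apply, Pi.smul_apply, smul_eq_mul]
        ring
      rw [ge_iff_le, h3]
      calc a * (∑ k, g₁ k * (y k - x₀ k)) + bb * (∑ k, g₂ k * (y k - x₀ k))
          ≤ a * (f y - f x₀) + bb * (f y - f x₀) :=
            add_le_add (mul_le_mul_of_nonneg_left h1 ha) (mul_le_mul_of_nonneg_left h2 hb)
        _ = f y - f x₀ := by rw [← add_mul, hab, one_mul]
end
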